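/- Let n be a natural number and c : {0,1}^n → ℝ an arbitrary function. Then for every x ∈ {0,1}^n with support set S_x = {i : x_i = 1}: Σ_{T ⊆ [n]} c(v_T) · Π_{i∈T} x_i · Π_{i∉T} (1 − 2x_i) = Σ_{T ⊆ S_x} (−1)^{|S_x| − |T|} c(v_T), where v_T ∈ {0,1}^n is the characteristic vector of T. That is, evaluating the network form of c at the input (x, 1−2x) computes the alternating (inclusion-exclusion) sum of c over subsets of the support of x. -/
import Mathlib


/-- Evaluating the network form of `c` at the input `(x, 1 - 2x)` computes the
alternating (inclusion-exclusion) sum of `c` over subsets of the support of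
`x`. -/
theorem network_form_eval_inclusion_exclusion (n : ℕ)
    (c : (Fin n → Fin 2) → ℝ) (x : Fin n → Fin 2) :
    ∑ T : Finset (Fin n),
        c (fun i => if i ∈ T then 1 else 0) *
          ((∏ i ∈ T, ((x i : ℕ) : ℝ)) * ∏ i ∈ Tᶜ, (1 - 2 * ((x i : ℕ) : ℝ))) =
    ∑ T ∈ (Finset.univ.filter (fun i => x i = 1)).powerset,
        (-1 : ℝ) ^ ((Finset.univ.filter (fun i => x i = 1)).card - T.card) *
          c (fun i => if i ∈ T then 1 else 0) := by
  set S : Finset (Fin n) := Finset.univ.filter (fun i => x i = 1) with hS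
  have hx : ∀ i : Fin n, x i = 1 ∨ ((x i : ℕ) : ℝ) = 0 := by
    intro i
    have h2 := (x i).isLt
    have h01 : (x i : ℕ) = 0 ∨ (x i : ℕ) = 1 := by omega
    rcases h01 with h | h
    · right; simp [h]
    · left; exact Fin.ext h
  have hmem : ∀ i : Fin n, i ∈ S ↔ x i = 1 := by
    intro i; simp [hS]
  rw [← Finset.sum_subset (Finset.subset_univ S.powerset)]
  · apply Finset.sum_congr rfl
    intro T hT
    have hTS : T ⊆ S := Finset.mem_powerset.mp hT
    have h1 : (∏ i ∈ T, ((x i : ℕ) : ℝ)) = 1 := by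
      apply Finset.prod_eq_one
      intro i hi
      have := (hmem i).mp (hTS hi)
      simp [this]
    have h2 : (∏ i ∈ Tᶜ, (1 - 2 * ((x i : ℕ) : ℝ))) = (-1 : ℝ) ^ (S.card - T.card) := by
      have hsplit : Tᶜ = (S \ T) ∪ (Tᶜ \ S) := by
        ext i
        simp only [Finset.mem_compl, Finset.mem_union, Finset.mem_sdiff]
        constructor
        · intro h
          by_cases hiS : i ∈ S
          · left; exact ⟨hiS, h⟩
          · right; exact ⟨h, hiS⟩
        · rintro (⟨_, h⟩ | ⟨h, _⟩) <;> exact h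
      have hdisj : Disjoint (S \ T) (Tᶜ \ S) := by
        apply Finset.disjoint_left.mpr
        intro i hi hi'
        exact (Finset.mem_sdiff.mp hi').2 (Finset.mem_sdiff.mp hi).1
      rw [hsplit, Finset.prod_union hdisj]
      have hA : (∏ i ∈ S \ T, (1 - 2 * ((x i : ℕ) : ℝ))) = (-1 : ℝ) ^ (S.card - T.card) := by
        rw [← Finset.card_sdiff_of_subset hTS]
        apply Finset.prod_eq_pow_card
        intro i hi
        have := (hmem i).mp (Finset.mem_sdiff.mp hi).1
        simp [this]
        norm_num
      have hB : (∏ i ∈ Tᶜ \ S, (1 - 2 * ((x i : ℕ) : ℝ))) = 1 := by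
        apply Finset.prod_eq_one
        intro i hi
        rcases hx i with h | h
        · exact absurd ((hmem i).mpr h) (Finset.mem_sdiff.mp hi).2
        · simp [h]
      rw [hA, hB, mul_one]
    rw [h1, h2, one_mul, mul_comm]
  · intro T _ hT
    have hTS : ¬ T ⊆ S := fun h => hT (Finset.mem_powerset.mpr h)
    obtain ⟨i, hiT, hiS⟩ := Finset.not_subset.mp hTS
    have hxi : ((x i : ℕ) : ℝ) = 0 := by
      rcases hx i with h | h
      · exact absurd ((hmem i).mpr h) hiS
      · exact h
    rw [Finset.prod_eq_zero hiT hxi]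
    ring
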